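/- arXiv:1212.4337 — 2 statements merged into one kernel-verified Lean document; each statement's English description precedes it below -/
import Mathlib

section
/- Let T: X → X be continuous on a compact metric space, Y a vector space with linearly compatible metric, and Ξ: M(X) → Y continuous and affine. Define Λ(y,φ) = sup{ h(T,μ) + ∫φ dμ : μ ∈ M(X,T), Ξμ = y } for y ∈ Ξ(M(X,T)) and Λ(y,φ) = −∞ otherwise, where φ ∈ C(X,ℝ). Then for any subset C ⊂ Y, inf_{y∈C} Λ(y,φ) = inf_{y ∈ co(C)} Λ(y,φ), where co(C) is the convex hull of C. -/
open MeasureTheory Filter Topology Set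
open scoped ENNReal

noncomputable section

/-- The `n`-th (here: `(n+1)`-st) empirical measure
`L_{n+1} x = (1/(n+1)) Σ_{k=0}^{n} δ_{T^k x}` as a Borel probability measure. -/
noncomputable def empPM {X : Type*} [MeasurableSpace X] (T : X → X) (x : X) (n : ℕ) :
    ProbabilityMeasure X :=
  ⟨((n + 1 : ℝ≥0∞))⁻¹ • ∑ k ∈ Finset.range (n + 1), Measure.dirac (T^[k] x), by
    constructor
    rw [Measure.smul_apply, Measure.coe_finset_sum, Finset.sum_apply]
    simp only [measure_univ, Finset.sum_const, Finset.card_range, nsmul_eq_mul, mul_one]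
    rw [smul_eq_mul]
    have h1 : ((n : ℝ≥0∞) + 1) ≠ 0 := by simp
    have h2 : ((n : ℝ≥0∞) + 1) ≠ ⊤ := by simp [ENNReal.add_ne_top]
    rw [show ((n + 1 : ℕ) : ℝ≥0∞) = (n : ℝ≥0∞) + 1 by push_cast; ring]
    exact ENNReal.inv_mul_cancel h1 h2⟩

/-- The set of accumulation (cluster) points of a sequence. -/
def accPts {Y : Type*} [TopologicalSpace Y] (u : ℕ → Y) : Set Y :=
  {p | MapClusterPt p atTop u}

/-- `μ` is a `T`-invariant probability measure. -/
def InvMeas {X : Type*} [MeasurableSpace X] (T : X → X) (μ : ProbabilityMeasure X) : Prop :=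
  (μ : Measure X).map T = (μ : Measure X)

/-- Entropy `H_μ` of the refined partition `⋁_{j=0}^{m-1} T^{-j} P` determined by a
finite measurable partition coded by `P : X → Fin k`. -/
noncomputable def partitionH {X : Type*} [MeasurableSpace X] (T : X → X) (μ : Measure X)
    {k : ℕ} (P : X → Fin k) (m : ℕ) : ℝ :=
  ∑ s : Fin m → Fin k,
    Real.negMulLog ((μ {x | ∀ j : Fin m, P (T^[(j : ℕ)] x) = s j}).toReal)

/-- Kolmogorov–Sinai (measure-theoretic) entropy `h(T,μ)`: the supremum over finite
measurable partitions of `lim_n (1/n) H_μ(⋁_{j<n} T^{-j}P)`; by subadditivity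
(Fekete) the limit equals the infimum. -/
noncomputable def entropyKS {X : Type*} [MeasurableSpace X] (T : X → X) (μ : Measure X) :
    ℝ≥0∞ :=
  ⨆ (k : ℕ) (P : X → Fin k) (_ : Measurable P),
    ⨅ n : ℕ, ENNReal.ofReal (partitionH T μ P (n + 1) / (n + 1))

/-- `Λ(y,φ) = sup { h(T,μ) + ∫ φ dμ : μ ∈ M(X,T), Ξ μ = y }`, with value `⊥ = -∞`
when no invariant measure is mapped to `y` by `Ξ`. -/
noncomputable def Lam {X Y : Type*} [MeasurableSpace X] (T : X → X)
    (Ξ : ProbabilityMeasure X → Y) (φ : X → ℝ) (y : Y) : EReal :=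
  ⨆ (μ : ProbabilityMeasure X) (_ : InvMeas T μ ∧ Ξ μ = y),
    ((entropyKS T (μ : Measure X) : ℝ≥0∞) : EReal) + ((∫ x, φ x ∂(μ : Measure X) : ℝ) : EReal)

end
open scoped ENNReal

/-- The convex combination `t μ + (1-t) ν` of two probability measures, `0 ≤ t ≤ 1`. -/
noncomputable def combPM {X : Type*} [MeasurableSpace X] (t : NNReal) (ht : t ≤ 1)
    (μ ν : MeasureTheory.ProbabilityMeasure X) : MeasureTheory.ProbabilityMeasure X :=
  ⟨(t : ℝ≥0∞) • (μ : MeasureTheory.Measure X) +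
      (((1 - t : NNReal)) : ℝ≥0∞) • (ν : MeasureTheory.Measure X), by
    constructor
    simp only [MeasureTheory.Measure.add_apply, MeasureTheory.Measure.smul_apply,
      MeasureTheory.measure_univ, smul_eq_mul, mul_one]
    rw [← ENNReal.coe_add, add_tsub_cancel_of_le ht]
    rfl⟩


section helpers
open MeasureTheory Filter Topology Set
open scoped ENNReal

variable {X : Type*} [MeasurableSpace X]

private lemma negMulLog_sum_le' {ι : Type*} (s : Finset ι) (f : ι → ℝ) (hf : ∀ i ∈ s, 0 ≤ f i) :
    Real.negMulLog (∑ i ∈ s, f i) ≤ ∑ i ∈ s, Real.negMulLog (f i) := by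
  rw [Real.negMulLog, neg_mul, Finset.sum_mul, ← Finset.sum_neg_distrib]
  apply Finset.sum_le_sum
  intro i hi
  rcases eq_or_lt_of_le (hf i hi) with h0 | h0
  · simp [Real.negMulLog, ← h0]
  · rw [Real.negMulLog, neg_mul, neg_le_neg_iff]
    apply mul_le_mul_of_nonneg_left _ (hf i hi)
    exact Real.log_le_log h0 (Finset.single_le_sum hf hi)

private lemma cell_measurable' {T : X → X} (hT : Measurable T)
    {k m : ℕ} {P : X → Fin k} (hP : Measurable P) (s : Fin m → Fin k) :
    MeasurableSet {x | ∀ j : Fin m, P (T^[(j : ℕ)] x) = s j} := by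
  have : {x | ∀ j : Fin m, P (T^[(j : ℕ)] x) = s j}
      = ⋂ j : Fin m, (fun x => P (T^[(j : ℕ)] x)) ⁻¹' {s j} := by
    ext x; simp [Set.mem_iInter]
  rw [this]
  exact MeasurableSet.iInter fun j =>
    (hP.comp (hT.iterate _)) (measurableSet_singleton _)

private lemma partitionH_nonneg' {T : X → X} (μ : Measure X) [IsProbabilityMeasure μ]
    {k : ℕ} (P : X → Fin k) (m : ℕ) : 0 ≤ partitionH T μ P m := by
  apply Finset.sum_nonneg
  intro s _
  exact Real.negMulLog_nonneg ENNReal.toReal_nonneg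
    (ENNReal.toReal_le_of_le_ofReal zero_le_one (by simpa using prob_le_one))

private lemma partitionH_refine_le' {T : X → X} (hT : Measurable T) (μ : Measure X)
    [IsFiniteMeasure μ]
    {k r : ℕ} {P : X → Fin k} {R : X → Fin r} (hR : Measurable R)
    (π : Fin r → Fin k) (hπ : ∀ x, P x = π (R x)) (m : ℕ) :
    partitionH T μ P m ≤ partitionH T μ R m := by
  unfold partitionH
  rw [← Finset.sum_fiberwise Finset.univ (fun u : Fin m → Fin r => π ∘ u)
      (fun u => Real.negMulLog ((μ {x | ∀ j : Fin m, R (T^[(j : ℕ)] x) = u j}).toReal))]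
  apply Finset.sum_le_sum
  intro s _
  have hdecomp : {x | ∀ j : Fin m, P (T^[(j : ℕ)] x) = s j}
      = ⋃ u ∈ Finset.filter (fun u : Fin m → Fin r => π ∘ u = s) Finset.univ,
          {x | ∀ j : Fin m, R (T^[(j : ℕ)] x) = u j} := by
    ext x
    simp only [Set.mem_setOf_eq, Set.mem_iUnion, Finset.mem_filter, Finset.mem_univ, true_and]
    constructor
    · intro h
      refine ⟨fun j => R (T^[(j : ℕ)] x), ?_, fun j => rfl⟩
      funext j
      rw [Function.comp_apply, ← hπ]; exact h j
    · rintro ⟨u, hu, hxu⟩ j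
      rw [hπ, hxu j, ← Function.comp_apply (f := π), hu]
  have hdisj : (↑(Finset.filter (fun u : Fin m → Fin r => π ∘ u = s) Finset.univ) :
      Set (Fin m → Fin r)).PairwiseDisjoint
      (fun u => {x | ∀ j : Fin m, R (T^[(j : ℕ)] x) = u j}) := by
    intro u _ v _ huv
    rw [Function.onFun, Set.disjoint_left]
    intro x hxu hxv
    exact huv (funext fun j => (hxu j).symm.trans (hxv j))
  rw [hdecomp, measure_biUnion_finset hdisj (fun u _ => cell_measurable' hT hR u),
    ENNReal.toReal_sum (fun u _ => measure_ne_top μ _)]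
  exact negMulLog_sum_le' _ _ (fun _ _ => ENNReal.toReal_nonneg)

private lemma partitionH_comb_ge' {T : X → X} (μ ν : Measure X)
    [IsFiniteMeasure μ] [IsFiniteMeasure ν]
    {a b : ℝ} (ha : 0 ≤ a) (hb : 0 ≤ b) (hab : a + b = 1)
    {k : ℕ} (P : X → Fin k) (m : ℕ) :
    a * partitionH T μ P m + b * partitionH T ν P m
      ≤ partitionH T (ENNReal.ofReal a • μ + ENNReal.ofReal b • ν) P m := by
  unfold partitionH
  rw [Finset.mul_sum, Finset.mul_sum, ← Finset.sum_add_distrib]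
  apply Finset.sum_le_sum
  intro s _
  set A := {x | ∀ j : Fin m, P (T^[(j : ℕ)] x) = s j}
  have hmeas : ((ENNReal.ofReal a • μ + ENNReal.ofReal b • ν) A).toReal
      = a * (μ A).toReal + b * (ν A).toReal := by
    rw [Measure.add_apply, Measure.smul_apply, Measure.smul_apply, smul_eq_mul, smul_eq_mul,
      ENNReal.toReal_add (by finiteness) (by finiteness), ENNReal.toReal_mul,
      ENNReal.toReal_mul, ENNReal.toReal_ofReal ha, ENNReal.toReal_ofReal hb]
  rw [hmeas]
  have := Real.concaveOn_negMulLog.2 (Set.mem_Ici.mpr (ENNReal.toReal_nonneg (a := μ A)))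
    (Set.mem_Ici.mpr (ENNReal.toReal_nonneg (a := ν A))) ha hb hab
  simpa [smul_eq_mul] using this

private lemma entropyKS_eq' (T : X → X) (μ : Measure X) :
    entropyKS T μ = ⨆ p : Σ k : ℕ, {P : X → Fin k // Measurable P},
      ⨅ n : ℕ, ENNReal.ofReal (partitionH T μ p.2.1 (n + 1) / (n + 1)) := by
  rw [entropyKS, iSup_sigma]
  exact iSup_congr fun k => by rw [iSup_subtype]

private lemma entropyKS_comb_ge' {T : X → X} (hT : Measurable T) (μ ν : Measure X)
    [IsProbabilityMeasure μ] [IsProbabilityMeasure ν]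
    {a b : ℝ} (ha : 0 ≤ a) (hb : 0 ≤ b) (hab : a + b = 1) :
    ENNReal.ofReal a * entropyKS T μ + ENNReal.ofReal b * entropyKS T ν
      ≤ entropyKS T (ENNReal.ofReal a • μ + ENNReal.ofReal b • ν) := by
  have hcombprob : IsProbabilityMeasure (ENNReal.ofReal a • μ + ENNReal.ofReal b • ν) := by
    constructor
    simp only [Measure.add_apply, Measure.smul_apply, measure_univ, smul_eq_mul, mul_one]
    rw [← ENNReal.ofReal_add ha hb, hab, ENNReal.ofReal_one]
  haveI := hcombprob
  rw [entropyKS_eq' T μ, entropyKS_eq' T ν, ENNReal.mul_iSup, ENNReal.mul_iSup]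
  have : Nonempty (Σ k : ℕ, {P : X → Fin k // Measurable P}) :=
    ⟨⟨1, fun _ => 0, measurable_const⟩⟩
  apply ENNReal.iSup_add_iSup_le
  intro p q
  set P := p.2.1 with hP
  set Q := q.2.1 with hQ
  set R : X → Fin (p.1 * q.1) := fun x => finProdFinEquiv (P x, Q x) with hRdef
  have hRmeas : Measurable R := Measurable.of_discrete.comp (p.2.2.prodMk q.2.2)
  have hπP : ∀ x, P x = (fun i : Fin (p.1 * q.1) => (finProdFinEquiv.symm i).1) (R x) := by
    intro x; simp [hRdef]
  have hπQ : ∀ x, Q x = (fun i : Fin (p.1 * q.1) => (finProdFinEquiv.symm i).2) (R x) := by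
    intro x; simp [hRdef]
  have hrefμ : ∀ n : ℕ, partitionH T μ P (n + 1) ≤ partitionH T μ R (n + 1) :=
    fun n => partitionH_refine_le' hT μ hRmeas
      (fun i => (finProdFinEquiv.symm i).1) hπP (n + 1)
  have hrefν : ∀ n : ℕ, partitionH T ν Q (n + 1) ≤ partitionH T ν R (n + 1) :=
    fun n => partitionH_refine_le' hT ν hRmeas
      (fun i => (finProdFinEquiv.symm i).2) hπQ (n + 1)
  calc (ENNReal.ofReal a * ⨅ n : ℕ, ENNReal.ofReal (partitionH T μ P (n + 1) / (n + 1)))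
        + ENNReal.ofReal b * ⨅ n : ℕ, ENNReal.ofReal (partitionH T ν Q (n + 1) / (n + 1))
      ≤ ⨅ n : ℕ, (ENNReal.ofReal a * ENNReal.ofReal (partitionH T μ R (n + 1) / (n + 1))
        + ENNReal.ofReal b * ENNReal.ofReal (partitionH T ν R (n + 1) / (n + 1))) := by
        refine le_iInf fun n => add_le_add ?_ ?_
        · refine mul_le_mul_right (iInf_le_of_le n (ENNReal.ofReal_le_ofReal ?_)) _
          exact div_le_div_of_nonneg_right (hrefμ n) (by positivity)
        · refine mul_le_mul_right (iInf_le_of_le n (ENNReal.ofReal_le_ofReal ?_)) _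
          exact div_le_div_of_nonneg_right (hrefν n) (by positivity)
    _ ≤ ⨅ n : ℕ, ENNReal.ofReal
        (partitionH T (ENNReal.ofReal a • μ + ENNReal.ofReal b • ν) R (n + 1) / (n + 1)) := by
        refine iInf_mono fun n => ?_
        have hnn₁ : 0 ≤ a * (partitionH T μ R (n + 1) / (n + 1)) :=
          mul_nonneg ha (div_nonneg (partitionH_nonneg' μ R (n + 1)) (by positivity))
        have hnn₂ : 0 ≤ b * (partitionH T ν R (n + 1) / (n + 1)) :=
          mul_nonneg hb (div_nonneg (partitionH_nonneg' ν R (n + 1)) (by positivity))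
        rw [← ENNReal.ofReal_mul ha, ← ENNReal.ofReal_mul hb, ← ENNReal.ofReal_add hnn₁ hnn₂]
        refine ENNReal.ofReal_le_ofReal ?_
        have heq : a * (partitionH T μ R (n + 1) / (n + 1))
            + b * (partitionH T ν R (n + 1) / (n + 1))
            = (a * partitionH T μ R (n + 1) + b * partitionH T ν R (n + 1)) / (n + 1) := by
          ring
        rw [heq]
        exact div_le_div_of_nonneg_right (partitionH_comb_ge' μ ν ha hb hab R (n + 1))
          (by positivity)
    _ ≤ entropyKS T (ENNReal.ofReal a • μ + ENNReal.ofReal b • ν) := by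
        rw [entropyKS]
        exact le_iSup₂_of_le (p.1 * q.1) R (le_iSup_of_le hRmeas le_rfl)

end helpers

section core
open MeasureTheory Filter Topology Set
open scoped ENNReal

variable {X : Type*} [MetricSpace X] [CompactSpace X] [MeasurableSpace X] [BorelSpace X]

private lemma integrable_cont' (φ : X → ℝ) (hφ : Continuous φ) (ρ : Measure X)
    [IsFiniteMeasure ρ] : Integrable φ ρ :=
  hφ.integrable_of_hasCompactSupport (isClosed_tsupport φ).isCompact

private lemma value_comb_ge' (T : X → X) (hT : Measurable T) (φ : X → ℝ) (hφ : Continuous φ)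
    (μ ν : ProbabilityMeasure X) {a b : ℝ} (ha : 0 < a) (hb : 0 < b) (hab : a + b = 1)
    (ht : a.toNNReal ≤ 1) :
    min ((entropyKS T (μ : Measure X) : EReal) + ((∫ x, φ x ∂(μ : Measure X) : ℝ) : EReal))
        ((entropyKS T (ν : Measure X) : EReal) + ((∫ x, φ x ∂(ν : Measure X) : ℝ) : EReal))
      ≤ (entropyKS T ((combPM a.toNNReal ht μ ν : ProbabilityMeasure X) : Measure X) : EReal)
        + ((∫ x, φ x ∂((combPM a.toNNReal ht μ ν : ProbabilityMeasure X) : Measure X) : ℝ) :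
            EReal) := by
  have hmeq : ((combPM a.toNNReal ht μ ν : ProbabilityMeasure X) : Measure X)
      = ENNReal.ofReal a • (μ : Measure X) + ENNReal.ofReal b • (ν : Measure X) := by
    show ((a.toNNReal : ℝ≥0∞) • (μ : Measure X)
        + ((1 - a.toNNReal : NNReal) : ℝ≥0∞) • (ν : Measure X)) = _
    have h1 : ((a.toNNReal : ℝ≥0∞)) = ENNReal.ofReal a := rfl
    have h2 : (1 - a.toNNReal : NNReal) = b.toNNReal := by
      apply NNReal.coe_injective
      rw [NNReal.coe_sub ht, Real.coe_toNNReal a ha.le, Real.coe_toNNReal b hb.le,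
        NNReal.coe_one]
      linarith
    rw [h1, h2]; rfl
  rw [hmeq]
  set cmb : Measure X := ENNReal.ofReal a • (μ : Measure X) + ENNReal.ofReal b • (ν : Measure X)
    with hcmb
  have hcombprob : IsProbabilityMeasure cmb := by
    constructor
    simp only [hcmb, Measure.add_apply, Measure.smul_apply, measure_univ, smul_eq_mul, mul_one]
    rw [← ENNReal.ofReal_add ha.le hb.le, hab, ENNReal.ofReal_one]
  have hent := entropyKS_comb_ge' hT (μ : Measure X) (ν : Measure X) ha.le hb.le hab
  have hint : ∫ x, φ x ∂cmb
      = a * ∫ x, φ x ∂(μ : Measure X) + b * ∫ x, φ x ∂(ν : Measure X) := by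
    rw [hcmb, integral_add_measure
        ((integrable_cont' φ hφ _).smul_measure ENNReal.ofReal_ne_top)
        ((integrable_cont' φ hφ _).smul_measure ENNReal.ofReal_ne_top),
      integral_smul_measure, integral_smul_measure,
      ENNReal.toReal_ofReal ha.le, ENNReal.toReal_ofReal hb.le, smul_eq_mul, smul_eq_mul]
  by_cases htop : entropyKS T cmb = ⊤
  · rw [htop, EReal.coe_ennreal_top, EReal.top_add_coe]
    exact le_top
  · have hμtop : entropyKS T (μ : Measure X) ≠ ⊤ := by
      intro h
      apply htop
      rw [eq_top_iff]
      refine le_trans ?_ hent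
      rw [h, ENNReal.mul_top (by simpa using ha)]
      exact le_top
    have hνtop : entropyKS T (ν : Measure X) ≠ ⊤ := by
      intro h
      apply htop
      rw [eq_top_iff]
      refine le_trans ?_ hent
      rw [h, ENNReal.mul_top (by simpa using hb)]
      exact (le_add_left le_rfl).trans le_rfl
    set Hμ := (entropyKS T (μ : Measure X)).toReal
    set Hν := (entropyKS T (ν : Measure X)).toReal
    set Hc := (entropyKS T cmb).toReal
    have hentR : a * Hμ + b * Hν ≤ Hc := by
      have := ENNReal.toReal_mono htop hent
      rwa [ENNReal.toReal_add (ENNReal.mul_ne_top ENNReal.ofReal_ne_top hμtop)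
        (ENNReal.mul_ne_top ENNReal.ofReal_ne_top hνtop), ENNReal.toReal_mul,
        ENNReal.toReal_mul, ENNReal.toReal_ofReal ha.le, ENNReal.toReal_ofReal hb.le] at this
    have hcoe : ∀ (x : ℝ≥0∞), x ≠ ⊤ → (x : EReal) = ((x.toReal : ℝ) : EReal) := by
      intro x hx
      conv_lhs => rw [← ENNReal.ofReal_toReal hx]
      rw [EReal.coe_ennreal_ofReal, max_eq_left ENNReal.toReal_nonneg]
    rw [hcoe _ htop, hcoe _ hμtop, hcoe _ hνtop, ← EReal.coe_add, ← EReal.coe_add,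
      ← EReal.coe_add, hint]
    set Iμ := ∫ x, φ x ∂(μ : Measure X)
    set Iν := ∫ x, φ x ∂(ν : Measure X)
    rcases le_total (Hμ + Iμ) (Hν + Iν) with h | h
    · refine (min_le_left _ _).trans ?_
      rw [EReal.coe_le_coe_iff]
      have e1 : Hμ + Iμ = a * (Hμ + Iμ) + b * (Hμ + Iμ) := by rw [← add_mul, hab, one_mul]
      have e2 := mul_le_mul_of_nonneg_left h hb.le
      linarith [hentR]
    · refine (min_le_right _ _).trans ?_
      rw [EReal.coe_le_coe_iff]
      have e1 : Hν + Iν = a * (Hν + Iν) + b * (Hν + Iν) := by rw [← add_mul, hab, one_mul]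
      have e2 := mul_le_mul_of_nonneg_left h ha.le
      linarith [hentR]

private lemma Lam_le_comb' {Y : Type*} [AddCommGroup Y] [Module ℝ Y]
    (T : X → X) (hT : Continuous T)
    (Ξ : ProbabilityMeasure X → Y)
    (hΞaff : ∀ (t : NNReal) (ht : t ≤ 1) (μ ν : ProbabilityMeasure X),
      Ξ (combPM t ht μ ν) = (t : ℝ) • Ξ μ + ((1 : ℝ) - (t : ℝ)) • Ξ ν)
    (φ : X → ℝ) (hφ : Continuous φ) {a b : ℝ} (ha : 0 < a) (hb : 0 < b) (hab : a + b = 1)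
    {y₁ y₂ : Y} (h12 : Lam T Ξ φ y₁ ≤ Lam T Ξ φ y₂) :
    Lam T Ξ φ y₁ ≤ Lam T Ξ φ (a • y₁ + b • y₂) := by
  have ht : a.toNNReal ≤ 1 := by
    rw [← Real.toNNReal_one]
    exact Real.toNNReal_le_toNNReal (by linarith)
  rw [Lam]
  refine iSup₂_le fun μ hμ => ?_
  set vμ : EReal := (entropyKS T (μ : Measure X) : EReal)
    + ((∫ x, φ x ∂(μ : Measure X) : ℝ) : EReal) with hvμ
  have hvμ1 : vμ ≤ Lam T Ξ φ y₁ := by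
    rw [Lam]
    exact le_iSup₂ (f := fun (ρ : ProbabilityMeasure X) (_ : InvMeas T ρ ∧ Ξ ρ = y₁) =>
      ((entropyKS T (ρ : Measure X) : ℝ≥0∞) : EReal)
        + ((∫ x, φ x ∂(ρ : Measure X) : ℝ) : EReal)) μ hμ
  have hvμ2 : vμ ≤ Lam T Ξ φ y₂ := hvμ1.trans h12
  refine le_of_forall_lt fun c hc => ?_
  have hc2 : c < Lam T Ξ φ y₂ := lt_of_lt_of_le hc hvμ2
  rw [Lam, lt_iSup_iff] at hc2
  obtain ⟨ν, hc2⟩ := hc2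
  rw [lt_iSup_iff] at hc2
  obtain ⟨hν, hcν⟩ := hc2
  set cmb := combPM a.toNNReal ht μ ν with hcmbdef
  have hinv : InvMeas T cmb := by
    show ((cmb : Measure X)).map T = (cmb : Measure X)
    show ((a.toNNReal : ℝ≥0∞) • (μ : Measure X)
        + ((1 - a.toNNReal : NNReal) : ℝ≥0∞) • (ν : Measure X)).map T = _
    rw [Measure.map_add _ _ hT.measurable, Measure.map_smul, Measure.map_smul, hμ.1, hν.1]
    rfl
  have hΞc : Ξ cmb = a • y₁ + b • y₂ := by
    rw [hcmbdef, hΞaff a.toNNReal ht μ ν, hμ.2, hν.2, Real.coe_toNNReal a ha.le]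
    have : (1 : ℝ) - a = b := by linarith
    rw [this]
  have hmin := value_comb_ge' T hT.measurable φ hφ μ ν ha hb hab ht
  refine lt_of_lt_of_le (lt_of_lt_of_le (lt_min hc hcν) hmin) ?_
  rw [Lam]
  exact le_iSup₂ (f := fun (ρ : ProbabilityMeasure X)
    (_ : InvMeas T ρ ∧ Ξ ρ = a • y₁ + b • y₂) =>
      ((entropyKS T (ρ : Measure X) : ℝ≥0∞) : EReal)
        + ((∫ x, φ x ∂(ρ : Measure X) : ℝ) : EReal)) cmb ⟨hinv, hΞc⟩

end core

/-- `inf_{y ∈ C} Λ(y,φ) = inf_{y ∈ co(C)} Λ(y,φ)` for a continuous affine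
deformation `Ξ : M(X) → Y` into a vector space `Y` with a linearly compatible
metric, where `Λ(y,φ) = sup{ h(T,μ)+∫φ dμ : μ ∈ M(X,T), Ξμ = y }` (`-∞` if empty). -/
theorem iInf_Lam_convexHull
    {X Y : Type*} [MetricSpace X] [CompactSpace X] [MeasurableSpace X] [BorelSpace X]
    [AddCommGroup Y] [Module ℝ Y] [MetricSpace Y]
    (hlin₁ : ∀ x₁ x₂ y₁ y₂ : Y, dist (x₁ + x₂) (y₁ + y₂) ≤ dist x₁ y₁ + dist x₂ y₂)
    (hlin₂ : ∀ (x y : Y) (l : ℝ), dist (l • x) (l • y) ≤ |l| * dist x y)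
    (T : X → X) (hT : Continuous T)
    (Ξ : ProbabilityMeasure X → Y) (hΞcont : Continuous Ξ)
    (hΞaff : ∀ (t : NNReal) (ht : t ≤ 1) (μ ν : ProbabilityMeasure X),
      Ξ (combPM t ht μ ν) = (t : ℝ) • Ξ μ + ((1 : ℝ) - (t : ℝ)) • Ξ ν)
    (φ : X → ℝ) (hφ : Continuous φ) (C : Set Y) :
    ⨅ y ∈ C, Lam T Ξ φ y = ⨅ y ∈ (convexHull ℝ) C, Lam T Ξ φ y := by
  refine le_antisymm ?_ (le_iInf₂ fun y hy => iInf₂_le y (subset_convexHull ℝ C hy))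
  have hsub : (convexHull ℝ) C ⊆ {y | (⨅ y ∈ C, Lam T Ξ φ y) ≤ Lam T Ξ φ y} := by
    apply convexHull_min
    · intro y hy
      simp only [Set.mem_setOf_eq]
      exact iInf₂_le y hy
    · intro y₁ h₁ y₂ h₂ a b ha hb hab
      rcases eq_or_lt_of_le ha with rfl | ha'
      · have hb1 : b = 1 := by linarith
        subst hb1
        simpa using h₂
      rcases eq_or_lt_of_le hb with rfl | hb'
      · have ha1 : a = 1 := by linarith
        subst ha1
        simpa using h₁
      rcases le_total (Lam T Ξ φ y₁) (Lam T Ξ φ y₂) with h | h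
      · exact le_trans h₁ (Lam_le_comb' T hT Ξ hΞaff φ hφ ha' hb' hab h)
      · have := Lam_le_comb' T hT Ξ hΞaff φ hφ hb' ha' (by linarith) h
        rw [add_comm (b • y₂) (a • y₁)] at this
        exact le_trans h₂ this
  exact le_iInf₂ fun y hy => hsub hy
end

section
/- Let T: X → X be continuous on a compact metric space and ψ: X → ℝ a strictly positive continuous function. For any set Z ⊂ X, the BS-dimension BS(Z,ψ) is the unique root of Bowen's equation P(Z, −sψ) = 0 in s, i.e., P(Z, −sψ) = 0 if and only if s = BS(Z,ψ). -/
open MeasureTheory Filter Topology Set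
open scoped ENNReal

noncomputable section

/-- Birkhoff sum `S_m φ(x) = Σ_{i=0}^{m-1} φ(T^i x)`. -/
def birkhoffS {X : Type*} (T : X → X) (φ : X → ℝ) (m : ℕ) (x : X) : ℝ :=
  ∑ i ∈ Finset.range m, φ (T^[i] x)

/-- Bowen ball `B_m(x,ε) = {y : max_{0 ≤ i < m} D(T^i x, T^i y) ≤ ε}`, with respect
to a distance function `D`. -/
def bowenBallD {X : Type*} (D : X → X → ℝ) (T : X → X) (x : X) (m : ℕ) (ε : ℝ) : Set X :=
  {y | ∀ i < m, D (T^[i] x) (T^[i] y) ≤ ε}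

/-- `C` is an admissible (finite or countable) cover of `Z` by Bowen balls
`B_m(x,ε)` with `m ≥ n`. -/
def covOK {X : Type*} (D : X → X → ℝ) (T : X → X) (Z : Set X) (n : ℕ) (ε : ℝ)
    (C : Set (X × ℕ)) : Prop :=
  C.Countable ∧ (∀ p ∈ C, n ≤ p.2) ∧ Z ⊆ ⋃ p ∈ C, bowenBallD D T p.1 p.2 ε

/-- `M(Z,t,φ,n,ε) = inf_C Σ exp(-t m + sup_{y ∈ B_m(x,ε)} S_m φ(y))`. -/
def Mpre {X : Type*} (D : X → X → ℝ) (T : X → X) (Z : Set X) (t : ℝ) (φ : X → ℝ)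
    (n : ℕ) (ε : ℝ) : ℝ≥0∞ :=
  ⨅ (C : Set (X × ℕ)) (_ : covOK D T Z n ε C),
    ∑' p : C, ENNReal.ofReal
      (Real.exp (-t * ((p : X × ℕ).2 : ℝ) +
        sSup (birkhoffS T φ (p : X × ℕ).2 '' bowenBallD D T (p : X × ℕ).1 (p : X × ℕ).2 ε)))

/-- `M(Z,t,φ,ε) = lim_n M(Z,t,φ,n,ε)` (the quantity is nondecreasing in `n`). -/
def Mlim {X : Type*} (D : X → X → ℝ) (T : X → X) (Z : Set X) (t : ℝ) (φ : X → ℝ)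
    (ε : ℝ) : ℝ≥0∞ :=
  ⨆ n : ℕ, Mpre D T Z t φ n ε

/-- `P(Z,φ,ε)`: the critical value of `t ↦ M(Z,t,φ,ε)`. -/
def pressAt {X : Type*} (D : X → X → ℝ) (T : X → X) (Z : Set X) (φ : X → ℝ)
    (ε : ℝ) : EReal :=
  sInf {s : EReal | ∃ t : ℝ, s = (t : EReal) ∧ Mlim D T Z t φ ε = 0}

/-- The Pesin–Pitskel topological pressure `P(Z,φ) = lim_{ε → 0⁺} P(Z,φ,ε)`
of an arbitrary subset `Z`, with respect to a distance function `D`. -/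
def pressD {X : Type*} (D : X → X → ℝ) (T : X → X) (Z : Set X) (φ : X → ℝ) : EReal :=
  limsup (fun ε : ℝ => pressAt D T Z φ ε) (𝓝[>] 0)

/-- Topological pressure of a subset of a metric space. -/
def pressure {X : Type*} [MetricSpace X] (T : X → X) (Z : Set X) (φ : X → ℝ) : EReal :=
  pressD (fun a b => dist a b) T Z φ

/-- `N(Z,t,ψ,n,ε) = inf_C Σ exp(-t · sup_{y ∈ B_m(x,ε)} S_m ψ(y))`
(the BS-dimension Carathéodory sum). -/
def Npre {X : Type*} (D : X → X → ℝ) (T : X → X) (Z : Set X) (t : ℝ) (ψ : X → ℝ)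
    (n : ℕ) (ε : ℝ) : ℝ≥0∞ :=
  ⨅ (C : Set (X × ℕ)) (_ : covOK D T Z n ε C),
    ∑' p : C, ENNReal.ofReal
      (Real.exp (-t *
        sSup (birkhoffS T ψ (p : X × ℕ).2 '' bowenBallD D T (p : X × ℕ).1 (p : X × ℕ).2 ε)))

/-- `BS(Z,ψ,ε)`: critical value of `t ↦ lim_n N(Z,t,ψ,n,ε)`. -/
def BSat {X : Type*} (D : X → X → ℝ) (T : X → X) (Z : Set X) (ψ : X → ℝ)
    (ε : ℝ) : EReal :=
  sInf {s : EReal | ∃ t : ℝ, s = (t : EReal) ∧ (⨆ n : ℕ, Npre D T Z t ψ n ε) = 0}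

/-- The BS-dimension `BS(Z,ψ) = lim_{ε → 0⁺} BS(Z,ψ,ε)` of Barreira–Schmeling. -/
def BSdimD {X : Type*} (D : X → X → ℝ) (T : X → X) (Z : Set X) (ψ : X → ℝ) : EReal :=
  limsup (fun ε : ℝ => BSat D T Z ψ ε) (𝓝[>] 0)

/-- BS-dimension in a metric space. -/
def BSdim {X : Type*} [MetricSpace X] (T : X → X) (Z : Set X) (ψ : X → ℝ) : EReal :=
  BSdimD (fun a b => dist a b) T Z ψ

end

namespace BowenAux
open scoped ENNReal
set_option linter.unusedSectionVars false

variable {X : Type*} [MetricSpace X] {T : X → X} {ψ φ : X → ℝ} {Z : Set X}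

lemma self_mem_ball {x : X} {m : ℕ} {ε : ℝ} (hε : 0 ≤ ε) :
    x ∈ bowenBallD (fun a b => dist a b) T x m ε := fun i _ => by simp [hε]

lemma ball_nonempty {x : X} {m : ℕ} {ε : ℝ} (hε : 0 ≤ ε) :
    (bowenBallD (fun a b => dist a b) T x m ε).Nonempty := ⟨x, self_mem_ball hε⟩

lemma birkhoff_cont (hT : Continuous T) (hφ : Continuous φ) (m : ℕ) :
    Continuous (birkhoffS T φ m) := by
  unfold birkhoffS; exact continuous_finset_sum _ fun i _ => hφ.comp (hT.iterate i)

lemma bddAbove_img [CompactSpace X] (hT : Continuous T) (hφ : Continuous φ)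
    (m : ℕ) (B : Set X) : BddAbove (birkhoffS T φ m '' B) := by
  have h1 : BddAbove (Set.range (birkhoffS T φ m)) :=
    (isCompact_univ.image (birkhoff_cont hT hφ m)).bddAbove.mono (by simp [Set.image_univ])
  exact h1.mono (Set.image_subset_range _ _)

lemma key {D : X → X → ℝ} {n : ℕ} {ε : ℝ} (F G : X × ℕ → ℝ≥0∞)
    (h : ∀ p : X × ℕ, n ≤ p.2 → F p ≤ G p) :
    (⨅ (C : Set (X × ℕ)) (_ : covOK D T Z n ε C), ∑' p : C, F ↑p)
      ≤ ⨅ (C : Set (X × ℕ)) (_ : covOK D T Z n ε C), ∑' p : C, G ↑p := by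
  refine le_iInf₂ fun C hC => (iInf₂_le C hC).trans ?_
  exact ENNReal.tsum_le_tsum fun p => h ↑p (hC.2.1 ↑p p.2)

lemma Mpre_anti {D : X → X → ℝ} {t t' : ℝ} (h : t ≤ t') (n : ℕ) (ε : ℝ) :
    Mpre D T Z t' φ n ε ≤ Mpre D T Z t φ n ε := by
  unfold Mpre
  refine key
    (fun q => ENNReal.ofReal (Real.exp (-t' * (q.2:ℝ) +
      sSup (birkhoffS T φ q.2 '' bowenBallD D T q.1 q.2 ε))))
    (fun q => ENNReal.ofReal (Real.exp (-t * (q.2:ℝ) +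
      sSup (birkhoffS T φ q.2 '' bowenBallD D T q.1 q.2 ε))))
    fun p _ => ?_
  refine ENNReal.ofReal_le_ofReal (Real.exp_le_exp.2 ?_)
  have h2 : (0:ℝ) ≤ (p.2 : ℝ) := Nat.cast_nonneg _
  nlinarith


lemma birkhoff_smul (s : ℝ) (m : ℕ) (y : X) :
    birkhoffS T (fun x => -s * ψ x) m y = -s * birkhoffS T ψ m y := by
  simp [birkhoffS, Finset.mul_sum]

lemma birkhoff_ge {c : ℝ} (hc : ∀ w, c ≤ ψ w) (m : ℕ) (y : X) :
    (m : ℝ) * c ≤ birkhoffS T ψ m y := by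
  calc (m : ℝ) * c = ∑ _i ∈ Finset.range m, c := by simp [mul_comm]
  _ ≤ _ := Finset.sum_le_sum fun i _ => hc _

lemma birkhoff_le {C₀ : ℝ} (hC : ∀ w, ψ w ≤ C₀) (m : ℕ) (y : X) :
    birkhoffS T ψ m y ≤ (m : ℝ) * C₀ := by
  calc birkhoffS T ψ m y ≤ ∑ _i ∈ Finset.range m, C₀ := Finset.sum_le_sum fun i _ => hC _
  _ = (m : ℝ) * C₀ := by simp [mul_comm]

lemma birkhoff_dist {γ ε : ℝ} (hmod : ∀ a b, dist a b ≤ ε → |ψ a - ψ b| ≤ γ)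
    {x y : X} {m : ℕ} (hy : y ∈ bowenBallD (fun a b => dist a b) T x m ε) :
    |birkhoffS T ψ m y - birkhoffS T ψ m x| ≤ (m : ℝ) * γ := by
  unfold birkhoffS
  rw [← Finset.sum_sub_distrib]
  calc |∑ i ∈ Finset.range m, (ψ (T^[i] y) - ψ (T^[i] x))|
      ≤ ∑ i ∈ Finset.range m, |ψ (T^[i] y) - ψ (T^[i] x)| := Finset.abs_sum_le_sum_abs _ _
  _ ≤ ∑ _i ∈ Finset.range m, γ := Finset.sum_le_sum fun i hi => by
        rw [abs_sub_comm]; exact hmod _ _ (hy i (Finset.mem_range.mp hi))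
  _ = (m : ℝ) * γ := by simp [mul_comm]

section comparisons
variable [CompactSpace X] (hT : Continuous T) (hψ : Continuous ψ)
include hT hψ

lemma sup_ge_center {x : X} {m : ℕ} {ε : ℝ} (hε : 0 ≤ ε) :
    birkhoffS T ψ m x ≤ sSup (birkhoffS T ψ m '' bowenBallD (fun a b => dist a b) T x m ε) :=
  le_csSup (bddAbove_img hT hψ m _) (Set.mem_image_of_mem _ (self_mem_ball hε))

lemma sup_nonneg0 (hψ0 : ∀ w, 0 ≤ ψ w) {x : X} {m : ℕ} {ε : ℝ} (hε : 0 ≤ ε) :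
    0 ≤ sSup (birkhoffS T ψ m '' bowenBallD (fun a b => dist a b) T x m ε) := by
  refine le_trans ?_ (sup_ge_center hT hψ hε)
  have := birkhoff_ge (ψ := ψ) (T := T) (c := 0) hψ0 m x
  simpa using this

lemma Npre_anti (hψ0 : ∀ w, 0 ≤ ψ w) {t t' : ℝ} (h : t ≤ t') {n : ℕ} {ε : ℝ} (hε : 0 ≤ ε) :
    Npre (fun a b => dist a b) T Z t' ψ n ε ≤ Npre (fun a b => dist a b) T Z t ψ n ε := by
  unfold Npre
  refine key
    (fun q => ENNReal.ofReal (Real.exp (-t' *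
      sSup (birkhoffS T ψ q.2 '' bowenBallD (fun a b => dist a b) T q.1 q.2 ε))))
    (fun q => ENNReal.ofReal (Real.exp (-t *
      sSup (birkhoffS T ψ q.2 '' bowenBallD (fun a b => dist a b) T q.1 q.2 ε))))
    fun p _ => ?_
  refine ENNReal.ofReal_le_ofReal (Real.exp_le_exp.2 ?_)
  have h0 := sup_nonneg0 (x := p.1) (m := p.2) hT hψ hψ0 hε
  nlinarith

lemma shift_c {c : ℝ} (hc : ∀ w, c ≤ ψ w) {s s' : ℝ} (hss : s ≤ s') (t : ℝ) {n : ℕ}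
    {ε : ℝ} (hε : 0 ≤ ε) :
    Mpre (fun a b => dist a b) T Z t (fun x => -s' * ψ x) n ε
      ≤ Mpre (fun a b => dist a b) T Z (t + (s' - s) * c) (fun x => -s * ψ x) n ε := by
  unfold Mpre
  refine key
    (fun q => ENNReal.ofReal (Real.exp (-t * (q.2 : ℝ) +
      sSup (birkhoffS T (fun x => -s' * ψ x) q.2 '' bowenBallD (fun a b => dist a b) T q.1 q.2 ε))))
    (fun q => ENNReal.ofReal (Real.exp (-(t + (s' - s) * c) * (q.2 : ℝ) +
      sSup (birkhoffS T (fun x => -s * ψ x) q.2 '' bowenBallD (fun a b => dist a b) T q.1 q.2 ε))))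
    fun p _ => ?_
  refine ENNReal.ofReal_le_ofReal (Real.exp_le_exp.2 ?_)
  obtain ⟨x, m⟩ := p
  have hsup : sSup (birkhoffS T (fun x => -s' * ψ x) m '' bowenBallD (fun a b => dist a b) T x m ε)
      ≤ sSup (birkhoffS T (fun x => -s * ψ x) m '' bowenBallD (fun a b => dist a b) T x m ε)
        - (s' - s) * ((m : ℝ) * c) := by
    refine csSup_le ((ball_nonempty hε).image _) ?_
    rintro r ⟨y, hy, rfl⟩
    have h1 : -s * birkhoffS T ψ m y ≤ sSup (birkhoffS T (fun x => -s * ψ x) m ''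
        bowenBallD (fun a b => dist a b) T x m ε) := by
      rw [← birkhoff_smul]
      exact le_csSup (bddAbove_img hT (continuous_const.mul hψ) m _) (Set.mem_image_of_mem _ hy)
    have h2 : (m : ℝ) * c ≤ birkhoffS T ψ m y := birkhoff_ge hc m y
    rw [birkhoff_smul]
    nlinarith
  nlinarith

lemma shift_C {C₀ : ℝ} (hC : ∀ w, ψ w ≤ C₀) {s s' : ℝ} (hss : s ≤ s') (t : ℝ) {n : ℕ}
    {ε : ℝ} (hε : 0 ≤ ε) :
    Mpre (fun a b => dist a b) T Z t (fun x => -s * ψ x) n ε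
      ≤ Mpre (fun a b => dist a b) T Z (t - (s' - s) * C₀) (fun x => -s' * ψ x) n ε := by
  unfold Mpre
  refine key
    (fun q => ENNReal.ofReal (Real.exp (-t * (q.2 : ℝ) +
      sSup (birkhoffS T (fun x => -s * ψ x) q.2 '' bowenBallD (fun a b => dist a b) T q.1 q.2 ε))))
    (fun q => ENNReal.ofReal (Real.exp (-(t - (s' - s) * C₀) * (q.2 : ℝ) +
      sSup (birkhoffS T (fun x => -s' * ψ x) q.2 '' bowenBallD (fun a b => dist a b) T q.1 q.2 ε))))
    fun p _ => ?_
  refine ENNReal.ofReal_le_ofReal (Real.exp_le_exp.2 ?_)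
  obtain ⟨x, m⟩ := p
  have hsup : sSup (birkhoffS T (fun x => -s * ψ x) m '' bowenBallD (fun a b => dist a b) T x m ε)
      ≤ sSup (birkhoffS T (fun x => -s' * ψ x) m '' bowenBallD (fun a b => dist a b) T x m ε)
        + (s' - s) * ((m : ℝ) * C₀) := by
    refine csSup_le ((ball_nonempty hε).image _) ?_
    rintro r ⟨y, hy, rfl⟩
    have h1 : -s' * birkhoffS T ψ m y ≤ sSup (birkhoffS T (fun x => -s' * ψ x) m ''
        bowenBallD (fun a b => dist a b) T x m ε) := by
      rw [← birkhoff_smul]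
      exact le_csSup (bddAbove_img hT (continuous_const.mul hψ) m _) (Set.mem_image_of_mem _ hy)
    have h2 : birkhoffS T ψ m y ≤ (m : ℝ) * C₀ := birkhoff_le hC m y
    rw [birkhoff_smul]
    nlinarith
  nlinarith

lemma bridge1 {s : ℝ} (hs : 0 ≤ s) {n : ℕ} {ε : ℝ} (hε : 0 ≤ ε) :
    Npre (fun a b => dist a b) T Z s ψ n ε
      ≤ Mpre (fun a b => dist a b) T Z 0 (fun x => -s * ψ x) n ε := by
  unfold Mpre Npre
  refine key
    (fun q => ENNReal.ofReal (Real.exp (-s *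
      sSup (birkhoffS T ψ q.2 '' bowenBallD (fun a b => dist a b) T q.1 q.2 ε))))
    (fun q => ENNReal.ofReal (Real.exp (-(0:ℝ) * (q.2 : ℝ) +
      sSup (birkhoffS T (fun x => -s * ψ x) q.2 '' bowenBallD (fun a b => dist a b) T q.1 q.2 ε))))
    fun p _ => ?_
  refine ENNReal.ofReal_le_ofReal (Real.exp_le_exp.2 ?_)
  obtain ⟨x, m⟩ := p
  have h1 : birkhoffS T ψ m x ≤ sSup (birkhoffS T ψ m '' bowenBallD (fun a b => dist a b) T x m ε) :=
    sup_ge_center hT hψ hε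
  have h2 : -s * birkhoffS T ψ m x ≤ sSup (birkhoffS T (fun x => -s * ψ x) m ''
      bowenBallD (fun a b => dist a b) T x m ε) := by
    rw [← birkhoff_smul]
    exact le_csSup (bddAbove_img hT (continuous_const.mul hψ) m _)
      (Set.mem_image_of_mem _ (self_mem_ball hε))
  have h3 : (-(0:ℝ)) * (m : ℝ) = 0 := by ring
  nlinarith

lemma bridge2 {γ c : ℝ} {ε : ℝ} (hmod : ∀ a b, dist a b ≤ ε → |ψ a - ψ b| ≤ γ)
    (hc : ∀ w, c ≤ ψ w) {s s' : ℝ} (hs' : s' ≤ s) (hs0 : 0 ≤ s) (hε : 0 ≤ ε) {n : ℕ} :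
    Mpre (fun a b => dist a b) T Z (2 * s * γ - (s - s') * c) (fun x => -s * ψ x) n ε
      ≤ Npre (fun a b => dist a b) T Z s' ψ n ε := by
  unfold Mpre Npre
  refine key
    (fun q => ENNReal.ofReal (Real.exp (-(2 * s * γ - (s - s') * c) * (q.2 : ℝ) +
      sSup (birkhoffS T (fun x => -s * ψ x) q.2 '' bowenBallD (fun a b => dist a b) T q.1 q.2 ε))))
    (fun q => ENNReal.ofReal (Real.exp (-s' *
      sSup (birkhoffS T ψ q.2 '' bowenBallD (fun a b => dist a b) T q.1 q.2 ε))))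
    fun p _ => ?_
  refine ENNReal.ofReal_le_ofReal (Real.exp_le_exp.2 ?_)
  obtain ⟨x, m⟩ := p
  set A := sSup (birkhoffS T ψ m '' bowenBallD (fun a b => dist a b) T x m ε) with hA
  have hA1 : A ≤ birkhoffS T ψ m x + (m : ℝ) * γ := by
    refine csSup_le ((ball_nonempty hε).image _) ?_
    rintro r ⟨y, hy, rfl⟩
    have := birkhoff_dist hmod hy
    have := abs_le.mp this
    linarith [this.2]
  have hA2 : (m : ℝ) * c ≤ A :=
    (birkhoff_ge hc m x).trans (sup_ge_center hT hψ hε)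
  have hA3 : birkhoffS T ψ m x ≤ A := sup_ge_center hT hψ hε
  have hsup : sSup (birkhoffS T (fun x => -s * ψ x) m '' bowenBallD (fun a b => dist a b) T x m ε)
      ≤ -s * A + 2 * s * ((m : ℝ) * γ) := by
    refine csSup_le ((ball_nonempty hε).image _) ?_
    rintro r ⟨y, hy, rfl⟩
    rw [birkhoff_smul]
    have hd := abs_le.mp (birkhoff_dist hmod hy)
    nlinarith [hd.1, hd.2]
  nlinarith [mul_le_mul_of_nonneg_left hA2 (sub_nonneg.mpr hs')]

lemma exists_mod {γ : ℝ} (hγ : 0 < γ) :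
    ∃ ε₀ > 0, ∀ p q : X, dist p q ≤ ε₀ → |ψ p - ψ q| ≤ γ := by
  have huc := CompactSpace.uniformContinuous_of_continuous hψ
  obtain ⟨ε₁, hε₁, hball⟩ := Metric.uniformContinuous_iff.mp huc γ hγ
  refine ⟨ε₁ / 2, by linarith, fun p q hpq => ?_⟩
  have h2 := hball (show dist p q < ε₁ by linarith)
  rw [Real.dist_eq] at h2
  exact h2.le
end comparisons

section level2
variable [CompactSpace X] (hT : Continuous T) (hψ : Continuous ψ)
include hT hψ

omit [CompactSpace X] hT hψ in
lemma covOK_empty {D : X → X → ℝ} (n : ℕ) (ε : ℝ) : covOK D T (∅ : Set X) n ε ∅ :=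
  ⟨Set.countable_empty, by simp, by simp⟩

omit [CompactSpace X] hT hψ in
lemma Mpre_empty {D : X → X → ℝ} (t : ℝ) (φ : X → ℝ) (n : ℕ) (ε : ℝ) :
    Mpre D T (∅ : Set X) t φ n ε = 0 :=
  le_antisymm ((iInf₂_le ∅ (covOK_empty n ε)).trans (by simp)) zero_le

omit [CompactSpace X] hT hψ in
lemma Npre_empty {D : X → X → ℝ} (t : ℝ) (n : ℕ) (ε : ℝ) :
    Npre D T (∅ : Set X) t ψ n ε = 0 :=
  le_antisymm ((iInf₂_le ∅ (covOK_empty n ε)).trans (by simp)) zero_le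

omit [CompactSpace X] hT hψ in
lemma one_le_infsum {D : X → X → ℝ} {n : ℕ} {ε : ℝ} (F : X × ℕ → ℝ≥0∞) (hZ : Z.Nonempty)
    (h1 : ∀ p : X × ℕ, 1 ≤ F p) :
    1 ≤ ⨅ (C : Set (X × ℕ)) (_ : covOK D T Z n ε C), ∑' p : C, F ↑p := by
  refine le_iInf₂ fun C hC => ?_
  obtain ⟨z, hz⟩ := hZ
  obtain ⟨p, hpC, -⟩ : ∃ p ∈ C, z ∈ bowenBallD D T p.1 p.2 ε := by simpa using hC.2.2 hz
  exact (h1 p).trans (ENNReal.le_tsum (⟨p, hpC⟩ : C))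

lemma one_le_Npre (hψ0 : ∀ w, 0 ≤ ψ w) (hZ : Z.Nonempty) {t : ℝ} (ht : t ≤ 0) {n : ℕ}
    {ε : ℝ} (hε : 0 ≤ ε) : 1 ≤ Npre (fun a b => dist a b) T Z t ψ n ε := by
  unfold Npre
  refine one_le_infsum (fun q => ENNReal.ofReal (Real.exp (-t *
      sSup (birkhoffS T ψ q.2 '' bowenBallD (fun a b => dist a b) T q.1 q.2 ε)))) hZ fun p => ?_
  rw [ENNReal.one_le_ofReal]
  refine Real.one_le_exp (mul_nonneg (by linarith) (sup_nonneg0 hT hψ hψ0 hε))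

lemma sup_zero {ε : ℝ} (hε : 0 ≤ ε) (x : X) (m : ℕ) :
    sSup (birkhoffS T (fun x => -0 * ψ x) m '' bowenBallD (fun a b => dist a b) T x m ε) = 0 := by
  have h : birkhoffS T (fun x => -0 * ψ x) m = fun _ => (0 : ℝ) := by
    funext y; simp [birkhoffS]
  rw [h, Set.Nonempty.image_const (ball_nonempty hε)]
  exact csSup_singleton 0

lemma one_le_Mpre_zero (hZ : Z.Nonempty) {t : ℝ} (ht : t ≤ 0) {n : ℕ}
    {ε : ℝ} (hε : 0 ≤ ε) : 1 ≤ Mpre (fun a b => dist a b) T Z t (fun x => -0 * ψ x) n ε := by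
  unfold Mpre
  refine one_le_infsum (fun q => ENNReal.ofReal (Real.exp (-t * (q.2 : ℝ) +
      sSup (birkhoffS T (fun x => -0 * ψ x) q.2 ''
        bowenBallD (fun a b => dist a b) T q.1 q.2 ε)))) hZ fun p => ?_
  rw [sup_zero hT hψ hε p.1 p.2]
  rw [ENNReal.one_le_ofReal]
  refine Real.one_le_exp ?_
  have : (0:ℝ) ≤ (p.2 : ℝ) := Nat.cast_nonneg _
  nlinarith
end level2

section ereal
-- generic sInf-of-zero-set helpers
lemma sInfQ_le {Q : ℝ → Prop} {t : ℝ} (h : Q t) :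
    sInf {s : EReal | ∃ u : ℝ, s = (u : EReal) ∧ Q u} ≤ (t : EReal) := sInf_le ⟨t, rfl, h⟩

lemma Q_of_sInf_lt {Q : ℝ → Prop} (mono : ∀ a b : ℝ, a ≤ b → Q a → Q b) {t : ℝ}
    (h : sInf {s : EReal | ∃ u : ℝ, s = (u : EReal) ∧ Q u} < (t : EReal)) : Q t := by
  obtain ⟨r, hr, hrt⟩ := sInf_lt_iff.mp h
  obtain ⟨u, rfl, hu⟩ := hr
  exact mono u t (by exact_mod_cast hrt.le) hu

lemma zero_le_sInfQ {Q : ℝ → Prop} (h : ∀ u : ℝ, Q u → (0:ℝ) ≤ u) :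
    (0 : EReal) ≤ sInf {s : EReal | ∃ u : ℝ, s = (u : EReal) ∧ Q u} := by
  refine le_sInf ?_
  rintro r ⟨u, rfl, hu⟩
  exact_mod_cast h u hu

lemma sInfQ_bot {Q : ℝ → Prop} (h : ∀ u : ℝ, Q u) :
    sInf {s : EReal | ∃ u : ℝ, s = (u : EReal) ∧ Q u} = ⊥ := by
  by_contra hne
  obtain ⟨z, hz1, hz2⟩ := EReal.exists_between_coe_real (Ne.bot_lt hne)
  exact absurd ((sInfQ_le (h z)).trans_lt hz2) (lt_irrefl _)
end ereal

section level3
variable [CompactSpace X]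

lemma Mlim_zero_mono {D : X → X → ℝ} {φ : X → ℝ} {t t' : ℝ} {ε : ℝ}
    (h : Mlim D T Z t φ ε = 0) (htt : t ≤ t') : Mlim D T Z t' φ ε = 0 := by
  refine le_antisymm (le_of_le_of_eq ?_ h) zero_le
  exact iSup_mono fun n => Mpre_anti htt n ε

variable (hT : Continuous T) (hψ : Continuous ψ)
include hT hψ

lemma NL_zero_mono (hψ0 : ∀ w, 0 ≤ ψ w) {t t' : ℝ} {ε : ℝ} (hε : 0 ≤ ε)
    (h : (⨆ n : ℕ, Npre (fun a b => dist a b) T Z t ψ n ε) = 0) (htt : t ≤ t') :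
    (⨆ n : ℕ, Npre (fun a b => dist a b) T Z t' ψ n ε) = 0 := by
  refine le_antisymm (le_of_le_of_eq ?_ h) zero_le
  exact iSup_mono fun n => Npre_anti hT hψ hψ0 htt hε

lemma W1 {c : ℝ} (hc : ∀ w, c ≤ ψ w) {s s' t : ℝ} (hss : s ≤ s') {ε : ℝ} (hε : 0 ≤ ε)
    (h : pressAt (fun a b => dist a b) T Z (fun x => -s * ψ x) ε < (t : EReal)) :
    pressAt (fun a b => dist a b) T Z (fun x => -s' * ψ x) ε
      ≤ ((t - (s' - s) * c : ℝ) : EReal) := by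
  unfold pressAt at h ⊢
  have hQ : Mlim (fun a b => dist a b) T Z t (fun x => -s * ψ x) ε = 0 :=
    Q_of_sInf_lt (fun a b hab ha => Mlim_zero_mono ha hab) h
  refine sInfQ_le ?_
  have hle : Mlim (fun a b => dist a b) T Z (t - (s' - s) * c) (fun x => -s' * ψ x) ε
      ≤ Mlim (fun a b => dist a b) T Z ((t - (s' - s) * c) + (s' - s) * c)
          (fun x => -s * ψ x) ε :=
    iSup_mono fun n => shift_c hT hψ hc hss _ hε
  have harg : (t - (s' - s) * c) + (s' - s) * c = t := by ring
  rw [harg] at hle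
  exact le_antisymm (le_of_le_of_eq hle hQ) zero_le

lemma W2 {C₀ : ℝ} (hC : ∀ w, ψ w ≤ C₀) {s s' t : ℝ} (hss : s ≤ s') {ε : ℝ} (hε : 0 ≤ ε)
    (h : pressAt (fun a b => dist a b) T Z (fun x => -s' * ψ x) ε < (t : EReal)) :
    pressAt (fun a b => dist a b) T Z (fun x => -s * ψ x) ε
      ≤ ((t + (s' - s) * C₀ : ℝ) : EReal) := by
  unfold pressAt at h ⊢
  have hQ : Mlim (fun a b => dist a b) T Z t (fun x => -s' * ψ x) ε = 0 :=
    Q_of_sInf_lt (fun a b hab ha => Mlim_zero_mono ha hab) h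
  refine sInfQ_le ?_
  have hle : Mlim (fun a b => dist a b) T Z (t + (s' - s) * C₀) (fun x => -s * ψ x) ε
      ≤ Mlim (fun a b => dist a b) T Z ((t + (s' - s) * C₀) - (s' - s) * C₀)
          (fun x => -s' * ψ x) ε :=
    iSup_mono fun n => shift_C hT hψ hC hss _ hε
  have harg : (t + (s' - s) * C₀) - (s' - s) * C₀ = t := by ring
  rw [harg] at hle
  exact le_antisymm (le_of_le_of_eq hle hQ) zero_le

lemma W3 {s : ℝ} (hs : 0 ≤ s) {ε : ℝ} (hε : 0 ≤ ε)
    (h : pressAt (fun a b => dist a b) T Z (fun x => -s * ψ x) ε < ((0 : ℝ) : EReal)) :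
    BSat (fun a b => dist a b) T Z ψ ε ≤ (s : EReal) := by
  unfold pressAt at h
  have hQ : Mlim (fun a b => dist a b) T Z 0 (fun x => -s * ψ x) ε = 0 :=
    Q_of_sInf_lt (fun a b hab ha => Mlim_zero_mono ha hab) h
  unfold BSat
  refine sInfQ_le ?_
  have hle : (⨆ n : ℕ, Npre (fun a b => dist a b) T Z s ψ n ε)
      ≤ Mlim (fun a b => dist a b) T Z 0 (fun x => -s * ψ x) ε :=
    iSup_mono fun n => bridge1 hT hψ hs hε
  exact le_antisymm (le_of_le_of_eq hle hQ) zero_le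

lemma W4 {γ c : ℝ} {ε : ℝ} (hmod : ∀ a b, dist a b ≤ ε → |ψ a - ψ b| ≤ γ)
    (hψ0 : ∀ w, 0 ≤ ψ w) (hc : ∀ w, c ≤ ψ w) {s s' : ℝ} (hs' : s' ≤ s) (hs0 : 0 ≤ s)
    (hε : 0 ≤ ε) (h : BSat (fun a b => dist a b) T Z ψ ε < (s' : EReal)) :
    pressAt (fun a b => dist a b) T Z (fun x => -s * ψ x) ε
      ≤ ((2 * s * γ - (s - s') * c : ℝ) : EReal) := by
  unfold BSat at h
  have hQ : (⨆ n : ℕ, Npre (fun a b => dist a b) T Z s' ψ n ε) = 0 :=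
    Q_of_sInf_lt (fun a b hab ha => NL_zero_mono hT hψ hψ0 hε ha hab) h
  unfold pressAt
  refine sInfQ_le ?_
  have hle : Mlim (fun a b => dist a b) T Z (2 * s * γ - (s - s') * c) (fun x => -s * ψ x) ε
      ≤ ⨆ n : ℕ, Npre (fun a b => dist a b) T Z s' ψ n ε :=
    iSup_mono fun n => bridge2 hT hψ hmod hc hs' hs0 hε
  exact le_antisymm (le_of_le_of_eq hle hQ) zero_le

lemma BSat_nonneg (hψ0 : ∀ w, 0 ≤ ψ w) (hZ : Z.Nonempty) {ε : ℝ} (hε : 0 ≤ ε) :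
    (0 : EReal) ≤ BSat (fun a b => dist a b) T Z ψ ε := by
  unfold BSat
  refine zero_le_sInfQ fun u hu => ?_
  by_contra hu0
  push_neg at hu0
  have h1 : 1 ≤ Npre (fun a b => dist a b) T Z u ψ 0 ε := one_le_Npre hT hψ hψ0 hZ hu0.le hε
  simpa using h1.trans ((le_iSup _ 0).trans hu.le)

lemma pressAt0_nonneg (hZ : Z.Nonempty) {ε : ℝ} (hε : 0 ≤ ε) :
    (0 : EReal) ≤ pressAt (fun a b => dist a b) T Z (fun x => -0 * ψ x) ε := by
  unfold pressAt
  refine zero_le_sInfQ fun u hu => ?_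
  by_contra hu0
  push_neg at hu0
  have h1 : 1 ≤ Mpre (fun a b => dist a b) T Z u (fun x => -0 * ψ x) 0 ε :=
    one_le_Mpre_zero hT hψ hZ hu0.le hε
  unfold Mlim at hu
  simpa using h1.trans ((le_iSup _ 0).trans hu.le)

omit [CompactSpace X] hT hψ in
lemma pressAt_empty {D : X → X → ℝ} (φ : X → ℝ) (ε : ℝ) :
    pressAt D T (∅ : Set X) φ ε = ⊥ := by
  unfold pressAt
  refine sInfQ_bot fun u => ?_
  unfold Mlim
  simp [Mpre_empty]

omit [CompactSpace X] hT hψ in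
lemma BSat_empty {D : X → X → ℝ} (ε : ℝ) : BSat D T (∅ : Set X) ψ ε = ⊥ := by
  unfold BSat
  refine sInfQ_bot fun u => ?_
  simp [Npre_empty]

end level3

end BowenAux

/-- Bowen's equation: for strictly positive continuous `ψ`, the BS-dimension
`BS(Z,ψ)` is the unique root of `s ↦ P(Z, -sψ)`:
`P(Z,-sψ) = 0 ↔ s = BS(Z,ψ)`. -/
theorem BSdim_unique_root_of_bowen {X : Type*} [MetricSpace X] [CompactSpace X]
    (T : X → X) (hT : Continuous T) (ψ : X → ℝ) (hψ : Continuous ψ)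
    (hpos : ∀ x, 0 < ψ x) (Z : Set X) (s : ℝ) :
    pressure T Z (fun x => -s * ψ x) = 0 ↔ (s : EReal) = BSdim T Z ψ := by
  classical
  rcases Set.eq_empty_or_nonempty Z with hZe | hZ
  · subst hZe
    have h1 : pressure T (∅ : Set X) (fun x => -s * ψ x) = ⊥ := by
      unfold pressure pressD
      simp only [BowenAux.pressAt_empty]
      exact limsup_const ⊥
    have h2 : BSdim T (∅ : Set X) ψ = ⊥ := by
      unfold BSdim BSdimD
      simp only [BowenAux.BSat_empty]
      exact limsup_const ⊥
    rw [h1, h2]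
    constructor
    · intro hcc
      exact absurd ((EReal.coe_zero).trans hcc.symm) (EReal.coe_ne_bot 0)
    · intro hcc
      exact absurd hcc (EReal.coe_ne_bot s)
  · obtain ⟨z, hz⟩ := hZ
    have hXne : Nonempty X := ⟨z⟩
    obtain ⟨xc, -, hxc⟩ := isCompact_univ.exists_isMinOn Set.univ_nonempty hψ.continuousOn
    obtain ⟨xC, -, hxC⟩ := isCompact_univ.exists_isMaxOn Set.univ_nonempty hψ.continuousOn
    set c := ψ xc with hcdef
    set C₀ := ψ xC with hCdef
    have hc : ∀ w, c ≤ ψ w := fun w => hxc (Set.mem_univ w)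
    have hC : ∀ w, ψ w ≤ C₀ := fun w => hxC (Set.mem_univ w)
    have hc0 : 0 < c := hpos xc
    have hC0 : 0 < C₀ := lt_of_lt_of_le hc0 (hc xC)
    have hψ0 : ∀ w, 0 ≤ ψ w := fun w => (hpos w).le
    set L := 𝓝[>] (0:ℝ) with hLdef
    have hev : ∀ᶠ ε in L, 0 < ε := self_mem_nhdsWithin
    set BS := BSdim T Z ψ with hBSdef
    have hBSlim : BS = limsup (fun ε => BSat (fun p q => dist p q) T Z ψ ε) L := rfl
    set F : ℝ → EReal := fun a => pressure T Z (fun x => -a * ψ x) with hFdef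
    have hFlim : ∀ a : ℝ, F a
        = limsup (fun ε => pressAt (fun p q => dist p q) T Z (fun x => -a * ψ x) ε) L :=
      fun a => rfl
    have hgoal : pressure T Z (fun x => -s * ψ x) = F s := rfl
    rw [hgoal]
    have H1 : ∀ a b t : ℝ, a ≤ b → F a < (t : EReal) →
        F b ≤ ((t - (b - a) * c : ℝ) : EReal) := by
      intro a b t hab hlt
      rw [hFlim] at hlt ⊢
      have hevlt := eventually_lt_of_limsup_lt hlt
      refine limsup_le_of_le (by isBoundedDefault) ?_
      filter_upwards [hevlt, hev] with ε h1 h2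
      exact BowenAux.W1 hT hψ hc hab h2.le h1
    have H2 : ∀ a b t : ℝ, a ≤ b → F b < (t : EReal) →
        F a ≤ ((t + (b - a) * C₀ : ℝ) : EReal) := by
      intro a b t hab hlt
      rw [hFlim] at hlt ⊢
      have hevlt := eventually_lt_of_limsup_lt hlt
      refine limsup_le_of_le (by isBoundedDefault) ?_
      filter_upwards [hevlt, hev] with ε h1 h2
      exact BowenAux.W2 hT hψ hC hab h2.le h1
    have H3 : ∀ a : ℝ, 0 ≤ a → F a < ((0:ℝ) : EReal) → BS ≤ (a : EReal) := by
      intro a ha0 hlt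
      rw [hFlim] at hlt
      rw [hBSlim]
      have hevlt := eventually_lt_of_limsup_lt hlt
      refine limsup_le_of_le (by isBoundedDefault) ?_
      filter_upwards [hevlt, hev] with ε h1 h2
      exact BowenAux.W3 hT hψ ha0 h2.le h1
    have H4 : ∀ a b : ℝ, 0 ≤ a → a < b → BS < (a : EReal) → F b < 0 := by
      intro a b ha0 hab hBSa
      have hb0 : 0 < b := lt_of_le_of_lt ha0 hab
      obtain ⟨γ, hγ0, hγle⟩ : ∃ γ, 0 < γ ∧ 2 * b * γ ≤ (b - a) * c / 2 := by
        refine ⟨(b - a) * c / (8 * (b + 1)),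
          div_pos (mul_pos (by linarith) hc0) (by linarith), ?_⟩
        rw [← mul_div_assoc, div_le_div_iff₀ (by linarith) (by norm_num)]
        nlinarith [mul_nonneg (mul_nonneg (show (0:ℝ) ≤ b - a by linarith) hc0.le) hb0.le,
          mul_nonneg (show (0:ℝ) ≤ b - a by linarith) hc0.le]
      obtain ⟨ε₀, hε₀, hmod⟩ := BowenAux.exists_mod hT hψ hγ0
      have hevBS : ∀ᶠ ε in L, BSat (fun p q => dist p q) T Z ψ ε < (a : EReal) := by
        rw [hBSlim] at hBSa
        exact eventually_lt_of_limsup_lt hBSa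
      have hevsm : ∀ᶠ ε in L, ε ∈ Set.Ioo (0:ℝ) ε₀ := Ioo_mem_nhdsGT_of_mem ⟨le_refl _, hε₀⟩
      have hle : F b ≤ ((-((b - a) * c / 2) : ℝ) : EReal) := by
        rw [hFlim]
        refine limsup_le_of_le (by isBoundedDefault) ?_
        filter_upwards [hevBS, hevsm] with ε h1 h2
        have hw := BowenAux.W4 hT hψ (fun p q hpq => hmod p q (hpq.trans h2.2.le)) hψ0 hc
          hab.le hb0.le h2.1.le h1
        refine hw.trans ?_
        exact_mod_cast (by nlinarith : 2 * b * γ - (b - a) * c ≤ -((b - a) * c / 2))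
      refine lt_of_le_of_lt hle ?_
      exact_mod_cast (by nlinarith : -((b - a) * c / 2) < (0:ℝ))
    have hBS0 : (0 : EReal) ≤ BS := by
      rw [hBSlim]
      exact le_limsup_of_frequently_le
        ((hev.mono fun ε h => BowenAux.BSat_nonneg hT hψ hψ0 ⟨z, hz⟩ h.le).frequently)
    have hf0 : (0 : EReal) ≤ F 0 := by
      rw [hFlim]
      exact le_limsup_of_frequently_le
        ((hev.mono fun ε h => BowenAux.pressAt0_nonneg hT hψ ⟨z, hz⟩ h.le).frequently)
    constructor
    · intro h0
      by_contra hne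
      rcases lt_or_gt_of_ne hne with hlt | hgt
      · rcases lt_or_ge s 0 with hs0 | hs0
        · have ht : F s < (((0 - s) * c / 2 : ℝ) : EReal) := by
            rw [h0]
            exact_mod_cast (by nlinarith : (0:ℝ) < (0 - s) * c / 2)
          have h2 := H1 s 0 ((0 - s) * c / 2) hs0.le ht
          have h3 : F 0 < (0 : EReal) := lt_of_le_of_lt h2
            (by exact_mod_cast (by nlinarith : (0 - s) * c / 2 - (0 - s) * c < (0:ℝ)))
          exact absurd h3 (not_lt.2 hf0)
        · obtain ⟨u, hu1, hu2⟩ := EReal.exists_between_coe_real hlt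
          have hsu : s < u := by exact_mod_cast hu1
          have ht : F s < (((u - s) * c / 2 : ℝ) : EReal) := by
            rw [h0]
            exact_mod_cast (by nlinarith : (0:ℝ) < (u - s) * c / 2)
          have h2 := H1 s u ((u - s) * c / 2) hsu.le ht
          have h3 : F u < ((0:ℝ) : EReal) := lt_of_le_of_lt h2
            (by exact_mod_cast (by nlinarith : (u - s) * c / 2 - (u - s) * c < (0:ℝ)))
          have h4 := H3 u (le_trans hs0 hsu.le) h3
          exact absurd hu2 (not_lt.2 h4)
      · obtain ⟨u, hu1, hu2⟩ := EReal.exists_between_coe_real hgt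
        have hu0 : 0 ≤ u := by
          have h5 : (0 : EReal) ≤ (u : EReal) := le_of_lt (lt_of_le_of_lt hBS0 hu1)
          exact_mod_cast h5
        have hus : u < s := by exact_mod_cast hu2
        have h6 := H4 u s hu0 hus hu1
        rw [h0] at h6
        exact absurd h6 (lt_irrefl _)
    · intro hBSs
      have hs0 : 0 ≤ s := by
        have h5 : (0:EReal) ≤ (s : EReal) := hBSs ▸ hBS0
        exact_mod_cast h5
      have hupper : F s ≤ 0 := by
        by_contra hpos'
        push_neg at hpos'
        obtain ⟨r, hr1, hr2⟩ := EReal.exists_between_coe_real hpos'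
        have hr0 : 0 < r := by exact_mod_cast hr1
        set δ := r / (2 * C₀) with hδdef
        have hδ0 : 0 < δ := div_pos hr0 (by linarith)
        have hFb : F (s + δ) < 0 :=
          H4 (s + δ/2) (s + δ) (by linarith) (by linarith)
            (by rw [← hBSs]; exact_mod_cast (by linarith : s < s + δ/2))
        have h2 := H2 s (s + δ) 0 (by linarith) (by exact_mod_cast hFb)
        have hδC : δ * C₀ = r / 2 := by
          rw [hδdef]
          field_simp
        have h3 : F s ≤ ((r/2 : ℝ) : EReal) := by
          refine h2.trans ?_
          exact_mod_cast (by nlinarith : (0:ℝ) + (s + δ - s) * C₀ ≤ r / 2)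
        have h4 : (r : EReal) < ((r/2:ℝ) : EReal) := hr2.trans_le h3
        have h5 : r < r/2 := by exact_mod_cast h4
        linarith
      have hlower : (0:EReal) ≤ F s := by
        rcases eq_or_lt_of_le hs0 with hseq | hspos
        · rw [← hseq]
          exact hf0
        · by_contra hneg
          push_neg at hneg
          obtain ⟨r, hr1, hr2⟩ := EReal.exists_between_coe_real hneg
          have hr0 : r < 0 := by exact_mod_cast hr2
          set δ := min s (-r / (2 * C₀)) with hδdef
          have hδ0 : 0 < δ := lt_min hspos (div_pos (by linarith) (by linarith))
          have hδs : δ ≤ s := min_le_left _ _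
          have hδC : δ * C₀ < -r := by
            have h5 : δ ≤ -r / (2*C₀) := min_le_right _ _
            have h6 := mul_le_mul_of_nonneg_right h5 hC0.le
            have h7 : (-r/(2*C₀)) * C₀ = -r/2 := by
              field_simp
            nlinarith
          have h2 := H2 (s - δ) s r (by linarith) hr1
          have h3 : F (s - δ) < ((0:ℝ) : EReal) := lt_of_le_of_lt h2
            (by exact_mod_cast (by linarith : r + (s - (s - δ)) * C₀ < (0:ℝ)))
          have h4 := H3 (s - δ) (by linarith) h3
          rw [← hBSs] at h4
          have h5 : s ≤ s - δ := by exact_mod_cast h4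
          linarith
      exact le_antisymm hupper hlower
end
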